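/- With θ_j, θ'_j as above (θ_j = (1/√2, (3/√20)e_j, −1/√20), θ'_j = (−1/√2, −(3/√20)e_j, −1/√20)) and the network F(x) := (1/d)·Σ_{j=1}^{d/2} [w_j φ(⟨r_j,x⟩+b_j) + w'_j φ(⟨r'_j,x⟩+b'_j)], for any input x = y·e_{j*} with y ∈ {±1} and j* ≤ d/2, the gradient of F at x (where defined) is a nonzero scalar multiple of e_{j*}. -/

import Mathlib

private lemma comp_le_norm {d : ℕ} (v : EuclideanSpace ℝ (Fin d)) (j : Fin d) :
    |v j| ≤ ‖v‖ := by
  have h := abs_real_inner_le_norm (EuclideanSpace.single j (1 : ℝ)) v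
  simpa [EuclideanSpace.inner_single_left, EuclideanSpace.norm_single] using h

private lemma affine_grad {d : ℕ} (c C : ℝ) (jstar : Fin d)
    (x : EuclideanSpace ℝ (Fin d)) :
    HasGradientAt (fun v : EuclideanSpace ℝ (Fin d) => c * v jstar + C)
      (c • EuclideanSpace.single jstar (1 : ℝ)) x := by
  rw [hasGradientAt_iff_hasFDerivAt]
  have hfun : (fun v : EuclideanSpace ℝ (Fin d) => c * v jstar + C) =
      fun v => (InnerProductSpace.toDual ℝ (EuclideanSpace ℝ (Fin d))
        (c • EuclideanSpace.single jstar (1 : ℝ))) v + C := by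
    funext v
    simp [InnerProductSpace.toDual_apply_apply, real_inner_smul_left,
      EuclideanSpace.inner_single_left]
  rw [hfun]
  exact (InnerProductSpace.toDual ℝ (EuclideanSpace ℝ (Fin d))
    (c • EuclideanSpace.single jstar (1 : ℝ))).hasFDerivAt.add_const C

theorem stmt_17 (d : ℕ) (hd2 : 2 ≤ d) (hde : Even d)
    (jstar : Fin d) (hj : (jstar : ℕ) < d / 2)
    (y : ℝ) (hy : y = 1 ∨ y = -1)
    (x : EuclideanSpace ℝ (Fin d))
    (hxdef : x = y • EuclideanSpace.single jstar (1 : ℝ))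
    (F : EuclideanSpace ℝ (Fin d) → ℝ)
    (hF : F = fun v =>
      (1 / (d : ℝ)) * ∑ j : Fin d,
        if (j : ℕ) < d / 2 then
          (1 / Real.sqrt 2) *
              max ((inner ℝ ((3 / Real.sqrt 20) • EuclideanSpace.single j (1 : ℝ)) v : ℝ) +
                (-(1 / Real.sqrt 20))) 0 +
            (-(1 / Real.sqrt 2)) *
              max ((inner ℝ (-((3 / Real.sqrt 20) • EuclideanSpace.single j (1 : ℝ))) v : ℝ) +
                (-(1 / Real.sqrt 20))) 0
        else 0) :
    ∃ c : ℝ, c ≠ 0 ∧ HasGradientAt F (c • EuclideanSpace.single jstar (1 : ℝ)) x := by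
  have s2pos : (0 : ℝ) < Real.sqrt 2 := Real.sqrt_pos.2 (by norm_num)
  have s20pos : (0 : ℝ) < Real.sqrt 20 := Real.sqrt_pos.2 (by norm_num)
  have hdpos : (0 : ℝ) < d := by positivity
  set c : ℝ := (1 / d) * (3 / (Real.sqrt 2 * Real.sqrt 20)) with hc
  have hcne : c ≠ 0 := by
    rw [hc]; positivity
  set C : ℝ := -y * (1 / d) * (1 / (Real.sqrt 2 * Real.sqrt 20)) with hC
  refine ⟨c, hcne, ?_⟩
  -- coordinates of x
  have hxj : ∀ j : Fin d, x j = if j = jstar then y else 0 := by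
    intro j
    rw [hxdef]
    by_cases h : j = jstar <;> simp [EuclideanSpace.single_apply, h]
  -- F agrees with an affine map near x
  have hball : ∀ v ∈ Metric.ball x (1/4), F v = c * v jstar + C := by
    intro v hv
    have hcomp : ∀ j : Fin d, |v j - x j| < 1/4 := by
      intro j
      have h1 : |(v - x) j| ≤ ‖v - x‖ := comp_le_norm (v - x) j
      have h2 : ‖v - x‖ < 1/4 := by
        rw [← dist_eq_norm]; exact Metric.mem_ball.mp hv
      have h3 : (v - x) j = v j - x j := rfl
      rw [h3] at h1
      linarith
    -- values for off-signal coordinates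
    have hsmall : ∀ j : Fin d, j ≠ jstar → |v j| < 1/4 := by
      intro j hjne
      have := hcomp j
      rw [hxj j, if_neg hjne] at this
      simpa using this
    rw [hF]
    simp only
    rw [Finset.sum_eq_single jstar]
    · -- the signal term
      have hip1 : (inner ℝ ((3 / Real.sqrt 20) • EuclideanSpace.single jstar (1 : ℝ)) v : ℝ)
          = (3 / Real.sqrt 20) * v jstar := by
        simp [real_inner_smul_left, EuclideanSpace.inner_single_left]
      have hip2 : (inner ℝ (-((3 / Real.sqrt 20) • EuclideanSpace.single jstar (1 : ℝ))) v : ℝ)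
          = -((3 / Real.sqrt 20) * v jstar) := by
        simp [inner_neg_left, real_inner_smul_left, EuclideanSpace.inner_single_left]
      rw [if_pos hj, hip1, hip2]
      have hvx := hcomp jstar
      rw [hxj jstar, if_pos rfl] at hvx
      have habs := abs_lt.mp hvx
      rcases hy with hy1 | hy1
      · -- y = 1 : v jstar > 3/4
        have hvj : (3:ℝ)/4 < v jstar := by rw [hy1] at habs; linarith [habs.1]
        have hpos1 : 0 < (3 / Real.sqrt 20) * v jstar + (-(1 / Real.sqrt 20)) := by
          have h : (3 / Real.sqrt 20) * v jstar + (-(1 / Real.sqrt 20))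
              = (3 * v jstar - 1) / Real.sqrt 20 := by ring
          rw [h]; exact div_pos (by linarith) s20pos
        have hneg2 : -((3 / Real.sqrt 20) * v jstar) + (-(1 / Real.sqrt 20)) < 0 := by
          have h1 : 0 < (3 / Real.sqrt 20) * v jstar := by positivity
          have h2 : 0 < 1 / Real.sqrt 20 := by positivity
          linarith
        rw [max_eq_left hpos1.le, max_eq_right hneg2.le]
        rw [hc, hC, hy1]
        ring
      · -- y = -1 : v jstar < -3/4
        have hvj : v jstar < -(3:ℝ)/4 := by rw [hy1] at habs; linarith [habs.2]
        have hneg1 : (3 / Real.sqrt 20) * v jstar + (-(1 / Real.sqrt 20)) < 0 := by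
          have h1 : (3 / Real.sqrt 20) * v jstar < 0 := by
            apply mul_neg_of_pos_of_neg (by positivity)
            linarith
          have h2 : 0 < 1 / Real.sqrt 20 := by positivity
          linarith
        have hpos2 : 0 < -((3 / Real.sqrt 20) * v jstar) + (-(1 / Real.sqrt 20)) := by
          have h : -((3 / Real.sqrt 20) * v jstar) + (-(1 / Real.sqrt 20))
              = (-3 * v jstar - 1) / Real.sqrt 20 := by ring
          rw [h]; exact div_pos (by linarith) s20pos
        rw [max_eq_right hneg1.le, max_eq_left hpos2.le]
        rw [hc, hC, hy1]
        ring
    · -- other terms vanish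
      intro j _ hjne
      by_cases hjd : (j : ℕ) < d / 2
      · rw [if_pos hjd]
        have hip1 : (inner ℝ ((3 / Real.sqrt 20) • EuclideanSpace.single j (1 : ℝ)) v : ℝ)
            = (3 / Real.sqrt 20) * v j := by
          simp [real_inner_smul_left, EuclideanSpace.inner_single_left]
        have hip2 : (inner ℝ (-((3 / Real.sqrt 20) • EuclideanSpace.single j (1 : ℝ))) v : ℝ)
            = -((3 / Real.sqrt 20) * v j) := by
          simp [inner_neg_left, real_inner_smul_left, EuclideanSpace.inner_single_left]
        rw [hip1, hip2]
        have habs := abs_lt.mp (hsmall j hjne)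
        have hbound : |(3 / Real.sqrt 20) * v j| < 1 / Real.sqrt 20 := by
          rw [abs_mul, abs_of_pos (show (0:ℝ) < 3 / Real.sqrt 20 by positivity)]
          rw [div_mul_eq_mul_div, div_lt_div_iff₀ s20pos s20pos]
          have : |v j| < 1/4 := hsmall j hjne
          nlinarith [abs_nonneg (v j), s20pos]
        have hb := abs_lt.mp hbound
        have hneg1 : (3 / Real.sqrt 20) * v j + (-(1 / Real.sqrt 20)) < 0 := by
          linarith [hb.2]
        have hneg2 : -((3 / Real.sqrt 20) * v j) + (-(1 / Real.sqrt 20)) < 0 := by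
          linarith [hb.1]
        rw [max_eq_right hneg1.le, max_eq_right hneg2.le]
        ring
      · rw [if_neg hjd]
    · intro h
      exact absurd (Finset.mem_univ jstar) h
  -- conclude via local congruence
  have hgrad := affine_grad (d := d) c C jstar x
  rw [hasGradientAt_iff_hasFDerivAt] at hgrad ⊢
  apply hgrad.congr_of_eventuallyEq
  have hmem : Metric.ball x (1/4) ∈ nhds x := Metric.ball_mem_nhds x (by norm_num)
  filter_upwards [hmem] with v hv
  exact hball v hv
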